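/- Let M = [[A, b],[0, 0]] be an (n+1)×(n+1) matrix where A is invertible with A⁻¹ ≤ 0 entrywise and b ∈ ℝⁿ is nonpositive. Then the group inverse of M equals the block matrix [[A⁻¹, A⁻²b],[0, 0]], and this matrix is entrywise nonpositive. -/

import Mathlib

open Matrix

/-- For `M = [[A, b],[0, 0]]` with `A` invertible, `A⁻¹ ≤ 0`, `b ≤ 0`, the group
inverse of `M` equals `[[A⁻¹, A⁻²b],[0, 0]]`, which is entrywise nonpositive. -/
theorem stmt_3 (n : ℕ) (A : Matrix (Fin n) (Fin n) ℝ)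
    (hAinv : IsUnit A.det)
    (hAneg : ∀ i j, A⁻¹ i j ≤ 0)
    (b : Fin n → ℝ) (hb : ∀ i, b i ≤ 0)
    (M X : Matrix (Fin n ⊕ Fin 1) (Fin n ⊕ Fin 1) ℝ)
    (hM : M = Matrix.fromBlocks A (fun i _ => b i) 0 0)
    (hX : X = Matrix.fromBlocks A⁻¹ (fun i _ => ((A⁻¹ * A⁻¹) *ᵥ b) i) 0 0) :
    M * X * M = M ∧ X * M * X = X ∧ M * X = X * M ∧ ∀ i j, X i j ≤ 0 := by
  have hcolM : (fun i (_ : Fin 1) => b i) = Matrix.replicateCol (Fin 1) b := rfl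
  have hcolX : (fun i (_ : Fin 1) => ((A⁻¹ * A⁻¹) *ᵥ b) i)
      = Matrix.replicateCol (Fin 1) ((A⁻¹ * A⁻¹) *ᵥ b) := rfl
  have hAA : A * A⁻¹ = 1 := Matrix.mul_nonsing_inv A hAinv
  have hAA' : A⁻¹ * A = 1 := Matrix.nonsing_inv_mul A hAinv
  have hvec : A *ᵥ ((A⁻¹ * A⁻¹) *ᵥ b) = A⁻¹ *ᵥ b := by
    rw [Matrix.mulVec_mulVec, ← Matrix.mul_assoc, hAA, Matrix.one_mul]
  have hcol1 : A * Matrix.replicateCol (Fin 1) ((A⁻¹ * A⁻¹) *ᵥ b)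
      = Matrix.replicateCol (Fin 1) (A⁻¹ *ᵥ b) := by
    rw [← Matrix.replicateCol_mulVec, hvec]
  have hcol2 : A⁻¹ * Matrix.replicateCol (Fin 1) b = Matrix.replicateCol (Fin 1) (A⁻¹ *ᵥ b) :=
    (Matrix.replicateCol_mulVec _ _).symm
  have hcol3 : A⁻¹ * Matrix.replicateCol (Fin 1) (A⁻¹ *ᵥ b)
      = Matrix.replicateCol (Fin 1) ((A⁻¹ * A⁻¹) *ᵥ b) := by
    rw [← Matrix.replicateCol_mulVec, Matrix.mulVec_mulVec]
  subst hM hX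
  rw [hcolM, hcolX]
  have hMX : Matrix.fromBlocks A (Matrix.replicateCol (Fin 1) b) (0 : Matrix (Fin 1) (Fin n) ℝ)
        (0 : Matrix (Fin 1) (Fin 1) ℝ) *
      Matrix.fromBlocks A⁻¹ (Matrix.replicateCol (Fin 1) ((A⁻¹ * A⁻¹) *ᵥ b)) 0 0
      = Matrix.fromBlocks 1 (Matrix.replicateCol (Fin 1) (A⁻¹ *ᵥ b)) 0 0 := by
    rw [Matrix.fromBlocks_multiply]
    simp [hAA, hcol1]
  have hXM : Matrix.fromBlocks A⁻¹ (Matrix.replicateCol (Fin 1) ((A⁻¹ * A⁻¹) *ᵥ b))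
        (0 : Matrix (Fin 1) (Fin n) ℝ) (0 : Matrix (Fin 1) (Fin 1) ℝ) *
      Matrix.fromBlocks A (Matrix.replicateCol (Fin 1) b) 0 0
      = Matrix.fromBlocks 1 (Matrix.replicateCol (Fin 1) (A⁻¹ *ᵥ b)) 0 0 := by
    rw [Matrix.fromBlocks_multiply]
    simp [hAA', hcol2]
  refine ⟨?_, ?_, by rw [hMX, hXM], ?_⟩
  · rw [hMX, Matrix.fromBlocks_multiply]
    simp
  · rw [hXM, Matrix.fromBlocks_multiply]
    simp
  · intro i j
    rcases i with i | i <;> rcases j with j | j <;>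
      simp [Matrix.fromBlocks, Matrix.mulVec, dotProduct, Matrix.mul_apply]
    · exact hAneg i j
    · exact Finset.sum_nonpos fun k _ => mul_nonpos_of_nonneg_of_nonpos
        (Finset.sum_nonneg fun l _ => by
          simpa using mul_nonneg (neg_nonneg.2 (hAneg i l)) (neg_nonneg.2 (hAneg l k)))
        (hb k)
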